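/- For k ≥ 1, let g = x_1^2 + x_2^2 + x_3^{k+1} + x_4^{2k+2} with weights (k+1, k+1, 2, 1) for (x_1,x_2,x_3,x_4), so g is weighted homogeneous of degree d = 2k+2 with weight sum w = 2k+5. Let R be the Jacobian ring of g. Then dim_C R_{d-w} = dim_C R_{-3} = 0, dim_C R_{3d-w} = dim_C R_{4k+1} = 0, and dim_C R_{2d-w} = dim_C R_{2k-1} = k, the latter space being spanned by the classes of monomials x_3^i x_4^j with 2i + j = 2k - 1. -/

import Mathlib

open MvPolynomial

lemma weightAk (k : ℕ) (d : Fin 4 →₀ ℕ) :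
    Finsupp.weight ![(k:ℤ)+1,(k:ℤ)+1,2,1] d
      = (d 0)*((k:ℤ)+1) + (d 1)*((k:ℤ)+1) + 2*(d 2) + (d 3) := by
  rw [Finsupp.weight_apply, Finsupp.sum_fintype]
  · simp [Fin.sum_univ_four]; ring
  · intro i; simp

lemma pderivAk (k : ℕ) (i : Fin 4) :
    pderiv i ((X 0 ^ 2 + X 1 ^ 2 + X 2 ^ (k + 1) + X 3 ^ (2 * k + 2) : MvPolynomial (Fin 4) ℂ)) =
      ![2 * X 0, 2 * X 1, ((k : MvPolynomial (Fin 4) ℂ)+1) * X 2 ^ k,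
        (2*(k : MvPolynomial (Fin 4) ℂ)+2) * X 3 ^ (2*k+1)] i := by
  fin_cases i <;> simp [pderiv_pow, pderiv_X, Pi.single_apply]

lemma unit_mul_mem {I : Ideal (MvPolynomial (Fin 4) ℂ)} {c : ℂ} (hc : c ≠ 0)
    {p : MvPolynomial (Fin 4) ℂ} (h : C c * p ∈ I) : p ∈ I := by
  have hp : p = C c⁻¹ * (C c * p) := by
    rw [← mul_assoc, ← C_mul, inv_mul_cancel₀ hc, C_1, one_mul]
  rw [hp]; exact I.mul_mem_left _ h

lemma mono_mem {I : Ideal (MvPolynomial (Fin 4) ℂ)} {i : Fin 4} {n : ℕ}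
    (hX : X i ^ n ∈ I) {d : Fin 4 →₀ ℕ} (hd : n ≤ d i) (c : ℂ) : monomial d c ∈ I := by
  have h : monomial d c = monomial (d - Finsupp.single i n) c * X i ^ n := by
    rw [X_pow_eq_monomial, monomial_mul, mul_one,
      tsub_add_cancel_of_le (Finsupp.single_le_iff.mpr hd)]
  rw [h]; exact I.mul_mem_left _ hX

set_option maxHeartbeats 2000000 in
theorem jacobian_ring_Ak_surface (k : ℕ) (hk : 1 ≤ k) :
    let g : MvPolynomial (Fin 4) ℂ :=
      X 0 ^ 2 + X 1 ^ 2 + X 2 ^ (k + 1) + X 3 ^ (2 * k + 2)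
    let I : Ideal (MvPolynomial (Fin 4) ℂ) :=
      Ideal.span (Set.range fun i => pderiv i g)
    let w : Fin 4 → ℤ := ![(k : ℤ) + 1, (k : ℤ) + 1, 2, 1]
    let piece : ℤ → Submodule ℂ (MvPolynomial (Fin 4) ℂ ⧸ I) := fun m =>
      (weightedHomogeneousSubmodule ℂ w m).map (Ideal.Quotient.mkₐ ℂ I).toLinearMap
    piece (-3) = ⊥ ∧ piece (4 * (k : ℤ) + 1) = ⊥ ∧
      Module.finrank ℂ (piece (2 * (k : ℤ) - 1)) = k ∧
      piece (2 * (k : ℤ) - 1) =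
        Submodule.span ℂ
          ((fun p : ℕ × ℕ => Ideal.Quotient.mk I (X 2 ^ p.1 * X 3 ^ p.2)) ''
            {p : ℕ × ℕ | 2 * p.1 + p.2 = 2 * k - 1}) := by
  intro g I w piece
  have hg : g = X 0 ^ 2 + X 1 ^ 2 + X 2 ^ (k + 1) + X 3 ^ (2 * k + 2) := rfl
  have hIdef : I = Ideal.span (Set.range fun i => pderiv i g) := rfl
  have hw : w = ![(k : ℤ) + 1, (k : ℤ) + 1, 2, 1] := rfl
  have hpiece : ∀ m, piece m =
      (weightedHomogeneousSubmodule ℂ w m).map (Ideal.Quotient.mkₐ ℂ I).toLinearMap :=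
    fun _ => rfl
  have hmem : ∀ i : Fin 4, pderiv i g ∈ I := fun i => Ideal.subset_span ⟨i, rfl⟩
  have hX0 : (X 0 : MvPolynomial (Fin 4) ℂ) ∈ I := by
    apply unit_mul_mem (c := 2) two_ne_zero
    have := hmem 0; rw [hg, pderivAk] at this
    simpa [map_ofNat] using this
  have hX1 : (X 1 : MvPolynomial (Fin 4) ℂ) ∈ I := by
    apply unit_mul_mem (c := 2) two_ne_zero
    have := hmem 1; rw [hg, pderivAk] at this
    simpa [map_ofNat] using this
  have hX2 : (X 2 ^ k : MvPolynomial (Fin 4) ℂ) ∈ I := by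
    apply unit_mul_mem (c := (k:ℂ)+1) (by exact_mod_cast Nat.succ_ne_zero k)
    have := hmem 2; rw [hg, pderivAk] at this
    simpa [map_add, C_1, C_eq_coe_nat] using this
  have hX3 : (X 3 ^ (2*k+1) : MvPolynomial (Fin 4) ℂ) ∈ I := by
    apply unit_mul_mem (c := 2*(k:ℂ)+2) (by exact_mod_cast Nat.succ_ne_zero (2*k+1))
    have := hmem 3; rw [hg, pderivAk] at this
    simpa [map_add, map_mul, map_ofNat, C_eq_coe_nat] using this
  have hI : I = Ideal.span {X 0, X 1, X 2 ^ k, X 3 ^ (2*k+1)} := by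
    apply le_antisymm
    · rw [hIdef, Ideal.span_le]
      rintro x ⟨i, rfl⟩
      show pderiv i g ∈ _
      rw [hg, pderivAk]
      fin_cases i <;> simp only [Matrix.cons_val_zero, Matrix.cons_val_one, Matrix.head_cons,
        Matrix.cons_val_two, Matrix.tail_cons, Matrix.cons_val_three] <;>
        exact Ideal.mul_mem_left _ _ (Ideal.subset_span (by simp))
    · rw [Ideal.span_le]
      rintro x hx
      simp only [Set.mem_insert_iff, Set.mem_singleton_iff] at hx
      rcases hx with rfl | rfl | rfl | rfl
      exacts [hX0, hX1, hX2, hX3]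
  -- every element of I has vanishing coefficients at small monomials in x₂, x₃ only
  have hIJ : ∀ p ∈ I, ∀ e : Fin 4 →₀ ℕ,
      e 0 = 0 → e 1 = 0 → e 2 < k → e 3 < 2*k+1 → coeff e p = 0 := by
    intro p hp
    rw [hI] at hp
    induction hp using Submodule.span_induction with
    | mem x hx =>
      intro e he0 he1 he2 he3
      simp only [Set.mem_insert_iff, Set.mem_singleton_iff] at hx
      rcases hx with rfl | rfl | rfl | rfl
      · rw [coeff_X', if_neg]
        intro hc
        have := DFunLike.congr_fun hc 0
        simp [he0, Finsupp.single_apply] at this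
      · rw [coeff_X', if_neg]
        intro hc
        have := DFunLike.congr_fun hc 1
        simp [he1, Finsupp.single_apply] at this
      · rw [coeff_X_pow, if_neg]
        intro hc
        have := DFunLike.congr_fun hc 2
        simp [Finsupp.single_apply] at this
        omega
      · rw [coeff_X_pow, if_neg]
        intro hc
        have := DFunLike.congr_fun hc 3
        simp [Finsupp.single_apply] at this
        omega
    | zero => intro e _ _ _ _; simp
    | add x y _ _ hx hy => intro e he0 he1 he2 he3
                           rw [coeff_add, hx e he0 he1 he2 he3, hy e he0 he1 he2 he3, add_zero]
    | smul r x _ hx =>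
      intro e he0 he1 he2 he3
      rw [smul_eq_mul, coeff_mul]
      apply Finset.sum_eq_zero
      rintro ⟨a, b⟩ hab
      rw [Finset.HasAntidiagonal.mem_antidiagonal] at hab
      have h0 := DFunLike.congr_fun hab 0
      have h1 := DFunLike.congr_fun hab 1
      have h2 := DFunLike.congr_fun hab 2
      have h3 := DFunLike.congr_fun hab 3
      simp only [Finsupp.add_apply] at h0 h1 h2 h3
      rw [hx b (by omega) (by omega) (by omega) (by omega), mul_zero]
  have hbot1 : piece (-3) = ⊥ := by
    have hsub : weightedHomogeneousSubmodule ℂ w (-3 : ℤ) = ⊥ := by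
      rw [eq_bot_iff]
      intro p hp
      rw [Submodule.mem_bot]
      by_contra hne
      obtain ⟨d, hd⟩ := ne_zero_iff.mp hne
      have h := hp hd
      rw [hw, weightAk] at h
      have t0 : (0:ℤ) ≤ (d 0)*((k:ℤ)+1) := by positivity
      have t1 : (0:ℤ) ≤ (d 1)*((k:ℤ)+1) := by positivity
      have t2 : (0:ℤ) ≤ 2*(d 2 : ℤ) := by positivity
      have t3 : (0:ℤ) ≤ (d 3 : ℤ) := by positivity
      omega
    rw [hpiece, hsub, Submodule.map_bot]
  have hbot2 : piece (4 * (k:ℤ) + 1) = ⊥ := by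
    rw [hpiece, eq_bot_iff]
    rintro x hx
    rw [Submodule.mem_map] at hx
    obtain ⟨p, hp, rfl⟩ := hx
    rw [Submodule.mem_bot, AlgHom.toLinearMap_apply, Ideal.Quotient.mkₐ_eq_mk,
      Ideal.Quotient.eq_zero_iff_mem]
    rw [p.as_sum]
    apply Submodule.sum_mem
    intro d hd
    have h := hp (mem_support_iff.mp hd)
    rw [hw, weightAk] at h
    by_cases c0 : 1 ≤ d 0
    · exact mono_mem (n:=1) (by rwa [pow_one]) c0 _
    by_cases c1 : 1 ≤ d 1
    · exact mono_mem (n:=1) (by rwa [pow_one]) c1 _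
    by_cases c2 : k ≤ d 2
    · exact mono_mem hX2 c2 _
    by_cases c3 : 2*k+1 ≤ d 3
    · exact mono_mem hX3 c3 _
    exfalso
    have e0 : d 0 = 0 := by omega
    have e1 : d 1 = 0 := by omega
    rw [e0, e1] at h
    push_cast at h
    omega
  have hspan : piece (2 * (k:ℤ) - 1) =
      Submodule.span ℂ
        ((fun p : ℕ × ℕ => Ideal.Quotient.mk I (X 2 ^ p.1 * X 3 ^ p.2)) ''
          {p : ℕ × ℕ | 2 * p.1 + p.2 = 2 * k - 1}) := by
    rw [hpiece]
    apply le_antisymm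
    · rintro x hx
      rw [Submodule.mem_map] at hx
      obtain ⟨p, hp, rfl⟩ := hx
      rw [AlgHom.toLinearMap_apply, Ideal.Quotient.mkₐ_eq_mk]
      have hps : (Ideal.Quotient.mk I) p
          = ∑ d ∈ p.support, (Ideal.Quotient.mk I) (monomial d (coeff d p)) := by
        conv_lhs => rw [p.as_sum]
        rw [map_sum]
      rw [hps]
      apply Submodule.sum_mem
      intro d hd
      have h := hp (mem_support_iff.mp hd)
      rw [hw, weightAk] at h
      have hcase : (monomial d (coeff d p) ∈ I) ∨
          (d 0 = 0 ∧ d 1 = 0 ∧ d 2 < k ∧ d 3 < 2*k+1) := by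
        by_cases c0 : 1 ≤ d 0
        · exact Or.inl (mono_mem (n:=1) (by rwa [pow_one]) c0 _)
        by_cases c1 : 1 ≤ d 1
        · exact Or.inl (mono_mem (n:=1) (by rwa [pow_one]) c1 _)
        by_cases c2 : k ≤ d 2
        · exact Or.inl (mono_mem hX2 c2 _)
        by_cases c3 : 2*k+1 ≤ d 3
        · exact Or.inl (mono_mem hX3 c3 _)
        exact Or.inr ⟨by omega, by omega, by omega, by omega⟩
      rcases hcase with hmemI | ⟨e0, e1, e2, e3⟩
      · rw [Ideal.Quotient.eq_zero_iff_mem.mpr hmemI]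
        exact Submodule.zero_mem _
      · have harith : 2 * d 2 + d 3 = 2*k-1 := by
          rw [e0, e1] at h
          push_cast at h
          omega
        have hdd : d = Finsupp.single 2 (d 2) + Finsupp.single 3 (d 3) := by
          ext a
          fin_cases a <;> simp [e0, e1, Finsupp.single_apply]
        have hmono : monomial d (coeff d p)
            = coeff d p • (X 2 ^ (d 2) * X 3 ^ (d 3) : MvPolynomial (Fin 4) ℂ) := by
          rw [X_pow_eq_monomial, X_pow_eq_monomial, monomial_mul, mul_one, smul_monomial,
            smul_eq_mul, mul_one, ← hdd]
        rw [hmono, ← Ideal.Quotient.mkₐ_eq_mk (R₁ := ℂ), map_smul]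
        exact Submodule.smul_mem _ _ (Submodule.subset_span ⟨(d 2, d 3), harith, rfl⟩)
    · rw [Submodule.span_le]
      rintro x ⟨⟨a, b⟩, hab, rfl⟩
      have hab' : 2 * a + b = 2 * k - 1 := hab
      show Ideal.Quotient.mk I (X 2 ^ a * X 3 ^ b) ∈
        (weightedHomogeneousSubmodule ℂ w (2 * (k:ℤ) - 1)).map (Ideal.Quotient.mkₐ ℂ I).toLinearMap
      rw [Submodule.mem_map]
      refine ⟨X 2 ^ a * X 3 ^ b, ?_, by rw [AlgHom.toLinearMap_apply, Ideal.Quotient.mkₐ_eq_mk]⟩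
      rw [mem_weightedHomogeneousSubmodule, X_pow_eq_monomial, X_pow_eq_monomial,
        monomial_mul, mul_one]
      apply isWeightedHomogeneous_monomial
      rw [hw, weightAk]
      norm_num [Finsupp.add_apply, Finsupp.single_apply, Fin.ext_iff]
      omega
  have hvrange : Set.range (fun i : Fin k =>
        Ideal.Quotient.mk I (X 2 ^ (i:ℕ) * X 3 ^ (2*k-1-2*(i:ℕ)) : MvPolynomial (Fin 4) ℂ))
      = ((fun p : ℕ × ℕ => Ideal.Quotient.mk I (X 2 ^ p.1 * X 3 ^ p.2)) ''
          {p : ℕ × ℕ | 2 * p.1 + p.2 = 2 * k - 1}) := by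
    ext x
    constructor
    · rintro ⟨i, rfl⟩
      exact ⟨((i:ℕ), 2*k-1-2*(i:ℕ)), by have := i.isLt; simp only [Set.mem_setOf_eq]; omega, rfl⟩
    · rintro ⟨⟨a, b⟩, hab, rfl⟩
      have hab' : 2 * a + b = 2 * k - 1 := hab
      have ha : a < k := by omega
      refine ⟨⟨a, ha⟩, ?_⟩
      have hb : 2*k-1-2*a = b := by omega
      simp [hb]
  have hli : LinearIndependent ℂ (fun i : Fin k =>
      Ideal.Quotient.mk I (X 2 ^ (i:ℕ) * X 3 ^ (2*k-1-2*(i:ℕ)) : MvPolynomial (Fin 4) ℂ)) := by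
    rw [Fintype.linearIndependent_iff]
    intro gc hgc i
    have hsum : (∑ j : Fin k, gc j • (X 2 ^ (j:ℕ) * X 3 ^ (2*k-1-2*(j:ℕ)) :
        MvPolynomial (Fin 4) ℂ)) ∈ I := by
      rw [← Ideal.Quotient.eq_zero_iff_mem, ← Ideal.Quotient.mkₐ_eq_mk (R₁ := ℂ), map_sum]
      simp only [map_smul]
      rw [Ideal.Quotient.mkₐ_eq_mk (R₁ := ℂ)]
      exact hgc
    set e : Fin 4 →₀ ℕ := Finsupp.single 2 (i:ℕ) + Finsupp.single 3 (2*k-1-2*(i:ℕ)) with he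
    have hcoeff := hIJ _ hsum e
      (by simp [he, Finsupp.single_apply])
      (by simp [he, Finsupp.single_apply])
      (by simp [he, Finsupp.single_apply])
      (by simp [he, Finsupp.single_apply]; omega)
    rw [coeff_sum] at hcoeff
    rw [Finset.sum_eq_single i] at hcoeff
    · rwa [coeff_smul, X_pow_eq_monomial, X_pow_eq_monomial, monomial_mul, mul_one,
        coeff_monomial, if_pos rfl, smul_eq_mul, mul_one] at hcoeff
    · intro j _ hji
      rw [coeff_smul, X_pow_eq_monomial, X_pow_eq_monomial, monomial_mul, mul_one,
        coeff_monomial, if_neg, smul_zero]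
      intro hc
      apply hji
      have := DFunLike.congr_fun hc 2
      simp only [he, Finsupp.add_apply, Finsupp.single_apply] at this
      norm_num [Fin.ext_iff] at this
      exact Fin.ext this
    · intro hni
      exact absurd (Finset.mem_univ i) hni
  have hrank : Module.finrank ℂ (piece (2 * (k:ℤ) - 1)) = k := by
    rw [hspan, ← hvrange, finrank_span_eq_card hli, Fintype.card_fin]
  exact ⟨hbot1, hbot2, hrank, hspan⟩
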